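/- The Lobachevsky function satisfies the duplication identity Λ(2θ) = 2Λ(θ) + 2Λ(θ + π/2) for all real θ. -/

import Mathlib

open Real

noncomputable def Λ (θ : ℝ) : ℝ := -∫ t in (0:ℝ)..θ, Real.log |2 * Real.sin t|

namespace LobachevskyAux
open MeasureTheory Set intervalIntegral

-- integrability of -log on (0,1]
lemma neg_log_integrable : IntegrableOn (fun x : ℝ => -Real.log x) (Set.Ioc 0 1) := by
  have := integrableOn_deriv_of_nonneg (a := (0:ℝ)) (b := 1)
    (g := fun x => x - x * Real.log x) (g' := fun x => -Real.log x)
    (by fun_prop)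
    (fun x hx => by
      have h1 : HasDerivAt (fun x : ℝ => x * Real.log x) (Real.log x + 1) x := by
        simpa using (Real.hasDerivAt_mul_log (ne_of_gt hx.1))
      have h2 := (hasDerivAt_id' x).sub h1; rw [show (1:ℝ) - (Real.log x + 1) = -Real.log x by ring] at h2; exact h2)
    (fun x hx => by
      have := Real.log_nonpos (le_of_lt hx.1) (le_of_lt hx.2)
      simp only [neg_nonneg]; linarith)
  exact this

noncomputable def G (t : ℝ) : ℝ := Real.log |2 * Real.sin t|

lemma G_meas : Measurable G := Real.measurable_log.comp (by fun_prop)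

lemma abs_log_integrable : IntegrableOn (fun x : ℝ => |Real.log x|) (Set.Ioc 0 (π/2)) := by
  have h1 : IntegrableOn (fun x : ℝ => |Real.log x|) (Set.Ioc 0 1) := by
    apply neg_log_integrable.congr_fun _ measurableSet_Ioc
    intro x hx
    simp [abs_of_nonpos (Real.log_nonpos (le_of_lt hx.1) hx.2)]
  have h2 : IntegrableOn (fun x : ℝ => |Real.log x|) (Set.Ioc 1 (π/2)) := by
    apply (ContinuousOn.integrableOn_Icc ?_).mono_set Set.Ioc_subset_Icc_self
    apply ContinuousOn.abs
    apply Real.continuousOn_log.mono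
    intro x hx
    simp only [Set.mem_Icc] at hx
    simp only [Set.mem_compl_iff, Set.mem_singleton_iff]
    intro h; rw [h] at hx; linarith [hx.1]
  have : Set.Ioc (0:ℝ) (π/2) ⊆ Set.Ioc 0 1 ∪ Set.Ioc 1 (π/2) := by
    intro x hx
    rcases le_or_gt x 1 with h | h
    · exact Or.inl ⟨hx.1, h⟩
    · exact Or.inr ⟨h, hx.2⟩
  exact (h1.union h2).mono_set this

lemma G_int_half : IntervalIntegrable G MeasureTheory.volume 0 (π/2) := by
  rw [intervalIntegrable_iff_integrableOn_Ioc_of_le (by positivity)]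
  apply MeasureTheory.Integrable.mono'
    (g := fun t => |Real.log t| + (Real.log 2 + |Real.log (4/π)|))
    (abs_log_integrable.add (integrableOn_const measure_Ioc_lt_top.ne))
    (G_meas.aestronglyMeasurable.restrict)
  · filter_upwards [MeasureTheory.ae_restrict_mem measurableSet_Ioc] with t ht
    have ht0 : 0 < t := ht.1
    have ht2 : t ≤ π/2 := ht.2
    have hsin : 2/π * t ≤ Real.sin t := Real.mul_le_sin (le_of_lt ht0) ht2
    have hsin1 : Real.sin t ≤ 1 := Real.sin_le_one t
    have hπ : (0:ℝ) < π := Real.pi_pos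
    have hlb : 4/π * t ≤ 2 * Real.sin t := by
      have : 2 * (2/π * t) ≤ 2 * Real.sin t := by linarith
      calc 4/π * t = 2 * (2/π * t) := by ring
        _ ≤ _ := this
    have hst : 0 < Real.sin t := lt_of_lt_of_le (by positivity) hsin
    have habs : |2 * Real.sin t| = 2 * Real.sin t := abs_of_pos (by linarith)
    have hup : G t ≤ Real.log 2 := by
      rw [show G t = Real.log |2 * Real.sin t| from rfl, habs]
      exact Real.log_le_log (by linarith) (by linarith)
    have hlo : Real.log (4/π) + Real.log t ≤ G t := by
      rw [show G t = Real.log |2 * Real.sin t| from rfl, habs,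
        ← Real.log_mul (by positivity) (ne_of_gt ht0)]
      exact Real.log_le_log (by positivity) hlb
    rw [Real.norm_eq_abs]
    rcases le_or_gt 0 (G t) with h | h
    · rw [abs_of_nonneg h]
      have : (0:ℝ) ≤ |Real.log t| := abs_nonneg _
      have : (0:ℝ) ≤ |Real.log (4/π)| := abs_nonneg _
      linarith
    · rw [abs_of_neg h]
      have h1 := neg_le_abs (Real.log t)
      have h2 := neg_abs_le (Real.log t)
      have h3 := neg_abs_le (Real.log (4/π))
      have h4 := Real.log_nonneg (by norm_num : (1:ℝ) ≤ 2)
      linarith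

lemma G_pi_sub (x : ℝ) : G (π - x) = G x := by
  unfold G; rw [Real.sin_pi_sub]

lemma G_periodic : Function.Periodic G π := by
  intro x; unfold G; rw [Real.sin_add_pi, mul_neg, abs_neg]

lemma G_int_half_pi : IntervalIntegrable G MeasureTheory.volume (π/2) π := by
  have h := (G_int_half.comp_sub_left π).symm
  have : (fun x => G (π - x)) = G := funext G_pi_sub
  rw [this] at h
  have e1 : π - π/2 = π/2 := by ring
  have e2 : π - 0 = π := by ring
  rwa [e1, e2] at h

lemma G_int_0_pi : IntervalIntegrable G MeasureTheory.volume 0 π :=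
  G_int_half.trans G_int_half_pi

lemma G_int_nat (n : ℕ) : IntervalIntegrable G MeasureTheory.volume 0 (n * π) := by
  induction n with
  | zero => simp
  | succ n ih =>
    apply ih.trans
    have h := G_int_0_pi.comp_sub_right (n * π)
    have : (fun x => G (x - n * π)) = G := by
      funext x
      simpa using (G_periodic.sub_nat_mul_eq (x := x) n)
    rw [this] at h
    have e1 : (0:ℝ) + ↑n * π = ↑n * π := by ring
    have e2 : π + ↑n * π = (↑(n+1):ℝ) * π := by push_cast; ring
    rwa [e1, e2] at h

lemma G_int (a b : ℝ) : IntervalIntegrable G MeasureTheory.volume a b := by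
  obtain ⟨n, hn⟩ := exists_nat_ge ((|a| + |b|) / π)
  have hπ : (0:ℝ) < π := Real.pi_pos
  have hab : |a| + |b| ≤ n * π := by
    rw [div_le_iff₀ hπ] at hn; linarith
  have h1 := G_int_nat n
  have h2 := h1.comp_add_right (n * π)
  have : (fun x => G (x + n * π)) = G := by
    funext x; simpa using (G_periodic.nat_mul n x)
  rw [this] at h2
  simp only [zero_sub, sub_self] at h2
  -- h2 : IntervalIntegrable G volume (-(n*π)) 0
  have h3 : IntervalIntegrable G MeasureTheory.volume (-(n*π)) (n*π) := h2.trans h1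
  apply h3.mono_set
  rw [Set.uIcc_of_le (by linarith [abs_nonneg a, abs_nonneg b] : -(n*π) ≤ n*π)]
  intro x hx
  constructor
  · calc -(n*π) ≤ -(|a| + |b|) := by linarith
      _ ≤ -|a| ⊓ -|b| := le_inf (by linarith [abs_nonneg b]) (by linarith [abs_nonneg a])
      _ ≤ a ⊓ b := inf_le_inf (neg_abs_le a) (neg_abs_le b)
      _ ≤ x := hx.1
  · calc x ≤ a ⊔ b := hx.2
      _ ≤ |a| ⊔ |b| := sup_le_sup (le_abs_self a) (le_abs_self b)
      _ ≤ |a| + |b| := sup_le (by linarith [abs_nonneg b]) (by linarith [abs_nonneg a])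
      _ ≤ n * π := hab

lemma bad_set_countable :
    Set.Countable ({x : ℝ | Real.sin x = 0} ∪ {x : ℝ | Real.cos x = 0}) := by
  apply Set.Countable.union
  · apply Set.Countable.mono _ (Set.countable_range (fun n : ℤ => (n : ℝ) * π))
    intro x hx
    obtain ⟨n, hn⟩ := Real.sin_eq_zero_iff.mp hx
    exact ⟨n, hn⟩
  · apply Set.Countable.mono _ (Set.countable_range (fun n : ℤ => ((2*n+1) : ℝ) * π / 2))
    intro x hx
    obtain ⟨n, hn⟩ := Real.cos_eq_zero_iff.mp hx
    exact ⟨n, by push_cast; linarith⟩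

lemma G_double_ae :
    ∀ᵐ x : ℝ, G (2 * x) = G x + G (x + π/2) := by
  have hz := bad_set_countable.measure_zero (μ := MeasureTheory.volume)
  rw [← MeasureTheory.compl_mem_ae_iff] at hz
  filter_upwards [hz] with x hx
  simp only [Set.mem_compl_iff, Set.mem_union, Set.mem_setOf_eq, not_or] at hx
  obtain ⟨hs, hc⟩ := hx
  unfold G
  have h1 : |2 * Real.sin (2 * x)| = |2 * Real.sin x| * |2 * Real.sin (x + π/2)| := by
    rw [Real.sin_add_pi_div_two, Real.sin_two_mul, ← abs_mul]
    ring_nf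
  rw [h1, Real.log_mul]
  · simp only [ne_eq, abs_eq_zero, mul_eq_zero]
    push_neg
    exact ⟨two_ne_zero, hs⟩
  · simp only [ne_eq, abs_eq_zero, mul_eq_zero, Real.sin_add_pi_div_two]
    push_neg
    exact ⟨two_ne_zero, hc⟩

lemma key (θ : ℝ) :
    (∫ t in (0:ℝ)..(2*θ), G t) =
      2 * (∫ t in (0:ℝ)..θ, G t) + 2 * ((∫ t in (0:ℝ)..(θ + π/2), G t) - ∫ t in (0:ℝ)..(π/2), G t) := by
  have h1 : (∫ t in (0:ℝ)..(2*θ), G t) = 2 * ∫ x in (0:ℝ)..θ, G (2 * x) := by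
    rw [intervalIntegral.mul_integral_comp_mul_left]
    norm_num
  have hshift : IntervalIntegrable (fun x => G (x + π/2)) MeasureTheory.volume 0 θ := by
    have h := (G_int (π/2) (θ + π/2)).comp_add_right (π/2)
    have e1 : π/2 - π/2 = (0:ℝ) := by ring
    have e2 : θ + π/2 - π/2 = θ := by ring
    rwa [e1, e2] at h
  have h2 : (∫ x in (0:ℝ)..θ, G (2 * x)) = ∫ x in (0:ℝ)..θ, (G x + G (x + π/2)) := by
    apply intervalIntegral.integral_congr_ae
    filter_upwards [G_double_ae] with x hx _
    exact hx
  have h3 : (∫ x in (0:ℝ)..θ, (G x + G (x + π/2)))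
      = (∫ x in (0:ℝ)..θ, G x) + ∫ x in (0:ℝ)..θ, G (x + π/2) :=
    intervalIntegral.integral_add (G_int 0 θ) hshift
  have h4 : (∫ x in (0:ℝ)..θ, G (x + π/2)) = ∫ x in (π/2)..(θ + π/2), G x := by
    have := intervalIntegral.integral_comp_add_right (a := (0:ℝ)) (b := θ) (f := G) (π/2)
    simpa using this
  have h5 : (∫ t in (0:ℝ)..(π/2), G t) + (∫ t in (π/2)..(θ + π/2), G t)
      = ∫ t in (0:ℝ)..(θ + π/2), G t :=
    intervalIntegral.integral_add_adjacent_intervals (G_int 0 (π/2)) (G_int (π/2) (θ + π/2))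
  rw [h1, h2, h3, h4]
  linarith

lemma int_half_eq_zero : (∫ t in (0:ℝ)..(π/2), G t) = 0 := by
  have hsym : (∫ t in (π/2)..π, G t) = ∫ t in (0:ℝ)..(π/2), G t := by
    have h := intervalIntegral.integral_comp_sub_left (a := (0:ℝ)) (b := π/2) (f := G) π
    have e1 : π - π/2 = π/2 := by ring
    have e2 : π - 0 = π := by ring
    rw [e1, e2] at h
    rw [← h]
    apply intervalIntegral.integral_congr
    intro x _
    exact G_pi_sub x
  have hsum : (∫ t in (0:ℝ)..(π/2), G t) + (∫ t in (π/2)..π, G t) = ∫ t in (0:ℝ)..π, G t :=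
    intervalIntegral.integral_add_adjacent_intervals (G_int 0 (π/2)) (G_int (π/2) π)
  have hkey := key (π/2)
  have e : 2 * (π/2) = π := by ring
  rw [e] at hkey
  have e2 : π/2 + π/2 = π := by ring
  rw [e2] at hkey
  linarith

theorem lobachevsky_duplication' (θ : ℝ) :
    (∫ t in (0:ℝ)..(2*θ), G t) = 2 * (∫ t in (0:ℝ)..θ, G t) + 2 * (∫ t in (0:ℝ)..(θ + π/2), G t) := by
  have := key θ
  rw [int_half_eq_zero] at this
  linarith

end LobachevskyAux

theorem lobachevsky_duplication (θ : ℝ) : Λ (2 * θ) = 2 * Λ θ + 2 * Λ (θ + π / 2) := by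
  have h := LobachevskyAux.lobachevsky_duplication' θ
  unfold Λ
  simp only [show (fun t => Real.log |2 * Real.sin t|) = LobachevskyAux.G from rfl]
  have : (∫ t in (0:ℝ)..(2*θ), LobachevskyAux.G t) =
      2 * (∫ t in (0:ℝ)..θ, LobachevskyAux.G t) +
      2 * (∫ t in (0:ℝ)..(θ + π/2), LobachevskyAux.G t) := h
  linarith
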